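/- If x = (x¹,…,xᵏ) is a local solution of the unconstrained MSSC problem, then for every j such that the attraction set A[xʲ] is nonempty, xʲ equals the barycenter of A[xʲ], i.e., xʲ = (1/|I(j)|)∑_{i∈I(j)} aⁱ where I(j) = {i : aⁱ ∈ A[xʲ]}. -/

import Mathlib

set_option maxHeartbeats 1000000


/-- The objective of the unconstrained MSSC problem. -/
noncomputable def msscF {n m k : ℕ} [NeZero k] (a : Fin m → EuclideanSpace ℝ (Fin n))
    (x : Fin k → EuclideanSpace ℝ (Fin n)) : ℝ :=
  (1 / (m : ℝ)) * ∑ i, (Finset.univ.inf' Finset.univ_nonempty fun j => ‖a i - x j‖ ^ 2)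

/-- The index set `I(j)` of the attraction set `A[xʲ]`. -/
noncomputable def attrIdx {n m k : ℕ} [NeZero k] (a : Fin m → EuclideanSpace ℝ (Fin n))
    (x : Fin k → EuclideanSpace ℝ (Fin n)) (j : Fin k) : Finset (Fin m) :=
  Finset.univ.filter fun i =>
    ‖a i - x j‖ = Finset.univ.inf' Finset.univ_nonempty fun q => ‖a i - x q‖

/-- Infimum of squares of nonnegative reals is the square of the infimum. -/
lemma inf'_sq {ι : Type*} (s : Finset ι) (hs : s.Nonempty) (f : ι → ℝ)
    (hf : ∀ i ∈ s, 0 ≤ f i) :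
    s.inf' hs (fun i => f i ^ 2) = (s.inf' hs f) ^ 2 := by
  obtain ⟨i, hi, hI⟩ := s.exists_mem_eq_inf' hs (fun i => f i ^ 2)
  obtain ⟨i', hi', hI'⟩ := s.exists_mem_eq_inf' hs f
  apply le_antisymm
  · rw [hI']
    exact Finset.inf'_le _ hi'
  · rw [hI]
    have h1 : s.inf' hs f ≤ f i := Finset.inf'_le _ hi
    have h0 : 0 ≤ s.inf' hs f := by rw [hI']; exact hf i' hi'
    nlinarith [hf i hi]

/-- If `x` is a local solution of the unconstrained MSSC problem, then every component
`xʲ` whose attraction set is nonempty equals the barycenter of its attraction set. -/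
theorem stmt6 {n m k : ℕ} [NeZero k]
    (a : Fin m → EuclideanSpace ℝ (Fin n))
    (x : Fin k → EuclideanSpace ℝ (Fin n))
    (hloc : IsLocalMin (msscF a) x) :
    ∀ j : Fin k, (attrIdx a x j).Nonempty →
      x j = ((attrIdx a x j).card : ℝ)⁻¹ • ∑ i ∈ attrIdx a x j, a i := by
  classical
  intro j hI
  set I := attrIdx a x j with hIdef
  set y₀ := x j with hy₀
  set s : EuclideanSpace ℝ (Fin n) := ∑ i ∈ I, (a i - y₀) with hsdef
  have hm : (0:ℝ) < m := by
    obtain ⟨i, _⟩ := hI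
    have : m ≠ 0 := fun h => by subst h; exact i.elim0
    exact_mod_cast Nat.pos_of_ne_zero this
  have hcard : (0:ℝ) < (I.card : ℝ) := by exact_mod_cast Finset.card_pos.mpr hI
  -- notation for the min at the original point
  set N : Fin m → ℝ := fun i => Finset.univ.inf' Finset.univ_nonempty fun q => ‖a i - x q‖
    with hNdef
  set D : Fin m → ℝ := fun i => Finset.univ.inf' Finset.univ_nonempty fun q => ‖a i - x q‖ ^ 2
    with hDdef
  have hDN : ∀ i, D i = (N i) ^ 2 := by
    intro i
    exact inf'_sq _ _ _ (fun q _ => norm_nonneg _)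
  have hmemI : ∀ i, i ∈ I ↔ ‖a i - x j‖ = N i := by
    intro i
    simp [hIdef, attrIdx, hNdef]
  -- the perturbed configuration
  set c : ℝ → (Fin k → EuclideanSpace ℝ (Fin n)) :=
    fun t => Function.update x j (y₀ + t • s) with hcdef
  have hc0 : c 0 = x := by
    simp [hcdef, hy₀, Function.update_eq_self]
  have hcont : Continuous c := by
    apply continuous_pi
    intro q
    by_cases hq : q = j
    · subst hq
      simp only [hcdef, Function.update_apply, eq_self_iff_true, if_true]
      fun_prop
    · simpa [hcdef, Function.update_apply, hq] using (continuous_const : Continuous fun _ : ℝ => x q)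
  have hmin : ∀ᶠ t in nhds (0:ℝ), msscF a x ≤ msscF a (c t) := by
    have hloc' : ∀ᶠ y in nhds x, msscF a x ≤ msscF a y := hloc
    have ht : Filter.Tendsto c (nhds 0) (nhds x) := by
      have := hcont.tendsto 0
      rwa [hc0] at this
    exact ht.eventually hloc'
  -- the quadratic upper bound
  set Q : ℝ → ℝ := fun t =>
    (1 / (m : ℝ)) * ((∑ i ∈ I, ‖a i - (y₀ + t • s)‖ ^ 2) + ∑ i ∈ Iᶜ, D i) with hQdef
  have hub : ∀ t, msscF a (c t) ≤ Q t := by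
    intro t
    rw [hQdef, msscF]
    apply mul_le_mul_of_nonneg_left _ (by positivity)
    rw [← Finset.sum_add_sum_compl I]
    apply add_le_add
    · apply Finset.sum_le_sum
      intro i hi
      have : c t j = y₀ + t • s := by simp [hcdef]
      calc (Finset.univ.inf' Finset.univ_nonempty fun q => ‖a i - c t q‖ ^ 2)
          ≤ ‖a i - c t j‖ ^ 2 := Finset.inf'_le _ (Finset.mem_univ j)
        _ = ‖a i - (y₀ + t • s)‖ ^ 2 := by rw [this]
    · apply Finset.sum_le_sum
      intro i hi
      rw [Finset.mem_compl] at hi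
      obtain ⟨q₀, _, hq₀⟩ := Finset.exists_mem_eq_inf' (Finset.univ_nonempty)
        (fun q => ‖a i - x q‖)
      have hq₀j : q₀ ≠ j := by
        intro h
        apply hi
        rw [hmemI]
        rw [← h, hNdef]
        exact hq₀.symm
      have hcx : c t q₀ = x q₀ := by simp [hcdef, Function.update_apply, hq₀j]
      calc (Finset.univ.inf' Finset.univ_nonempty fun q => ‖a i - c t q‖ ^ 2)
          ≤ ‖a i - c t q₀‖ ^ 2 := Finset.inf'_le _ (Finset.mem_univ q₀)
        _ = ‖a i - x q₀‖ ^ 2 := by rw [hcx]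
        _ = D i := by
            have hN : N i = ‖a i - x q₀‖ := hq₀
            rw [hDN i, hN]
  have hQ0 : Q 0 = msscF a x := by
    rw [hQdef, msscF]
    dsimp only
    congr 1
    rw [← Finset.sum_add_sum_compl I (fun i => Finset.univ.inf' Finset.univ_nonempty
      fun q => ‖a i - x q‖ ^ 2)]
    congr 1
    apply Finset.sum_congr rfl
    intro i hi
    have := (hmemI i).mp hi
    simp only [zero_smul, add_zero]
    rw [hy₀] at *
    rw [this, ← hDN i, hDdef]
  have hQmin : ∀ᶠ t in nhds (0:ℝ), Q 0 ≤ Q t := by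
    filter_upwards [hmin] with t ht
    rw [hQ0]
    exact ht.trans (hub t)
  -- expansion of the quadratic
  have hexp : ∀ t : ℝ, Q t = Q 0 +
      (1 / (m : ℝ)) * (t ^ 2 * I.card * ‖s‖ ^ 2 - 2 * t * ‖s‖ ^ 2) := by
    intro t
    have hterm : ∀ i ∈ I, ‖a i - (y₀ + t • s)‖ ^ 2
        = ‖a i - y₀‖ ^ 2 - 2 * (t * inner ℝ (a i - y₀) s) + t ^ 2 * ‖s‖ ^ 2 := by
      intro i _
      have h1 : a i - (y₀ + t • s) = (a i - y₀) - t • s := by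
        rw [sub_add_eq_sub_sub]
      rw [h1, norm_sub_sq_real, real_inner_smul_right, norm_smul, Real.norm_eq_abs,
        mul_pow, sq_abs]
    have hsum : ∑ i ∈ I, ‖a i - (y₀ + t • s)‖ ^ 2
        = (∑ i ∈ I, ‖a i - y₀‖ ^ 2) - 2 * t * ‖s‖ ^ 2 + I.card * (t ^ 2 * ‖s‖ ^ 2) := by
      rw [Finset.sum_congr rfl hterm]
      rw [Finset.sum_add_distrib, Finset.sum_sub_distrib, Finset.sum_const, ← Finset.mul_sum,
        ← Finset.mul_sum, ← sum_inner, ← hsdef, real_inner_self_eq_norm_sq, nsmul_eq_mul]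
      ring
    have hsum0 : ∑ i ∈ I, ‖a i - (y₀ + (0:ℝ) • s)‖ ^ 2 = ∑ i ∈ I, ‖a i - y₀‖ ^ 2 := by
      simp
    rw [hQdef]
    simp only [hsum, hsum0]
    ring
  -- conclude the gradient vanishes
  have hs0 : s = 0 := by
    by_contra hne
    have hnorm : (0:ℝ) < ‖s‖ ^ 2 := pow_pos (norm_pos_iff.mpr hne) 2
    obtain ⟨δ, hδ, hball⟩ := Metric.eventually_nhds_iff.mp hQmin
    set t : ℝ := min (δ / 2) (1 / (2 * I.card)) with htdef
    have ht0 : 0 < t := lt_min (by linarith) (one_div_pos.mpr (by linarith))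
    have htd : dist t 0 < δ := by
      rw [Real.dist_eq, sub_zero, abs_of_pos ht0]
      calc t ≤ δ / 2 := min_le_left _ _
        _ < δ := by linarith
    have hQt := hball htd
    rw [hexp t] at hQt
    have hX : 0 ≤ t ^ 2 * I.card * ‖s‖ ^ 2 - 2 * t * ‖s‖ ^ 2 := by
      have h1m : 0 < 1 / (m : ℝ) := by positivity
      nlinarith
    have htc : t * (I.card : ℝ) ≤ 1 / 2 := by
      calc t * (I.card : ℝ) ≤ (1 / (2 * I.card)) * I.card := by
            apply mul_le_mul_of_nonneg_right (min_le_right _ _) (le_of_lt hcard)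
        _ = 1 / 2 := by field_simp
    nlinarith [mul_pos ht0 hnorm]
  -- finish: barycenter formula
  have hsum : ∑ i ∈ I, a i = (I.card : ℝ) • y₀ := by
    have h1 : ∑ i ∈ I, (a i - y₀) = (∑ i ∈ I, a i) - I.card • y₀ := by
      rw [Finset.sum_sub_distrib, Finset.sum_const]
    rw [hsdef] at hs0
    rw [h1] at hs0
    have := sub_eq_zero.mp hs0
    rw [this, Nat.cast_smul_eq_nsmul]
  rw [hsum, inv_smul_smul₀ (ne_of_gt hcard)]
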